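/- Let n ≥ 1 and let γ : [0,1] → ℝ^{n+1} be a continuous path on the unit sphere S^n (‖γ(t)‖ = 1 for all t) whose image is not contained in any open hemisphere, i.e. for every unit vector v there exists t ∈ [0,1] with ⟪v, γ(t)⟫ ≤ 0. Then the length of γ is at least π. -/

import Mathlib

open scoped RealInnerProductSpace
open Set

section Aux

variable {E : Type*} [NormedAddCommGroup E] [InnerProductSpace ℝ E]

lemma abs_inner_le_one_of_unit {x y : E} (hx : ‖x‖ = 1) (hy : ‖y‖ = 1) : |⟪x, y⟫| ≤ 1 := by
  have := abs_real_inner_le_norm x y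
  rwa [hx, hy, mul_one] at this

lemma arccos_le_of_cos_le {c S : ℝ} (hS : 0 ≤ S) (h : Real.cos S ≤ c) :
    Real.arccos c ≤ S := by
  have h1 : Real.arccos c ≤ Real.arccos (Real.cos S) := by
    rw [Real.arccos_eq_pi_div_two_sub_arcsin, Real.arccos_eq_pi_div_two_sub_arcsin]
    exact sub_le_sub_left (Real.monotone_arcsin h) _
  by_cases hSπ : S ≤ Real.pi
  · rwa [Real.arccos_cos hS hSπ] at h1
  · exact (Real.arccos_le_pi c).trans (le_of_not_ge hSπ)

/-- Spherical triangle inequality for unit vectors. -/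
lemma arccos_inner_triangle (x y z : E) (hx : ‖x‖ = 1) (hy : ‖y‖ = 1) (hz : ‖z‖ = 1) :
    Real.arccos ⟪x, z⟫ ≤ Real.arccos ⟪x, y⟫ + Real.arccos ⟪y, z⟫ := by
  have ha : |⟪x, y⟫| ≤ 1 := abs_inner_le_one_of_unit hx hy
  have hb : |⟪y, z⟫| ≤ 1 := abs_inner_le_one_of_unit hy hz
  have hyy : ⟪y, y⟫ = 1 := by rw [real_inner_self_eq_norm_sq, hy]; norm_num
  have hxx : ⟪x, x⟫ = 1 := by rw [real_inner_self_eq_norm_sq, hx]; norm_num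
  have hzz : ⟪z, z⟫ = 1 := by rw [real_inner_self_eq_norm_sq, hz]; norm_num
  set a := ⟪x, y⟫ with hadef
  set b := ⟪y, z⟫ with hbdef
  set c := ⟪x, z⟫ with hcdef
  set u := x - a • y with hudef
  set w := z - b • y with hwdef
  have huw : ⟪u, w⟫ = c - a * b := by
    simp only [hudef, hwdef, inner_sub_left, inner_sub_right, real_inner_smul_left,
      real_inner_smul_right, hyy]
    rw [← hadef, ← hbdef, ← hcdef]
    ring
  have hnu : ‖u‖ = Real.sqrt (1 - a ^ 2) := by
    rw [show (1 : ℝ) - a ^ 2 = ⟪u, u⟫ by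
      simp only [hudef, inner_sub_left, inner_sub_right, real_inner_smul_left,
        real_inner_smul_right, hyy, hxx]
      rw [real_inner_comm x y, ← hadef]; ring]
    rw [real_inner_self_eq_norm_sq, Real.sqrt_sq (norm_nonneg _)]
  have hnw : ‖w‖ = Real.sqrt (1 - b ^ 2) := by
    rw [show (1 : ℝ) - b ^ 2 = ⟪w, w⟫ by
      simp only [hwdef, inner_sub_left, inner_sub_right, real_inner_smul_left,
        real_inner_smul_right, hyy, hzz]
      rw [real_inner_comm y z, ← hbdef]; ring]
    rw [real_inner_self_eq_norm_sq, Real.sqrt_sq (norm_nonneg _)]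
  have key : a * b - Real.sqrt (1 - a ^ 2) * Real.sqrt (1 - b ^ 2) ≤ c := by
    have h1 : |⟪u, w⟫| ≤ ‖u‖ * ‖w‖ := abs_real_inner_le_norm u w
    rw [huw, hnu, hnw] at h1
    have := neg_abs_le (c - a * b)
    linarith [abs_le.mp h1 |>.1]
  have hcos : Real.cos (Real.arccos a + Real.arccos b) ≤ c := by
    rw [Real.cos_add, Real.cos_arccos (abs_le.mp ha).1 (abs_le.mp ha).2,
      Real.cos_arccos (abs_le.mp hb).1 (abs_le.mp hb).2, Real.sin_arccos, Real.sin_arccos]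
    exact key
  exact arccos_le_of_cos_le (add_nonneg (Real.arccos_nonneg a) (Real.arccos_nonneg b)) hcos

lemma arccos_inner_eq_two_arcsin (x y : E) (hx : ‖x‖ = 1) (hy : ‖y‖ = 1) :
    Real.arccos ⟪x, y⟫ = 2 * Real.arcsin (‖x - y‖ / 2) := by
  have hns : ‖x - y‖ ^ 2 = 2 - 2 * ⟪x, y⟫ := by
    rw [norm_sub_sq_real, hx, hy]; ring
  have hc2 : ‖x - y‖ ≤ 2 := by
    calc ‖x - y‖ ≤ ‖x‖ + ‖y‖ := norm_sub_le x y
    _ = 2 := by rw [hx, hy]; norm_num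
  have hc0 : 0 ≤ ‖x - y‖ := norm_nonneg _
  apply Real.arccos_eq_of_eq_cos
  · have : 0 ≤ Real.arcsin (‖x - y‖ / 2) := Real.arcsin_nonneg.2 (by linarith)
    linarith
  · have := Real.arcsin_le_pi_div_two (‖x - y‖ / 2)
    linarith [Real.pi_pos]
  · have hs : Real.sin (Real.arcsin (‖x - y‖ / 2)) = ‖x - y‖ / 2 :=
      Real.sin_arcsin (by linarith) (by linarith)
    have := Real.cos_two_mul (Real.arcsin (‖x - y‖ / 2))
    have hsq := Real.sin_sq_add_cos_sq (Real.arcsin (‖x - y‖ / 2))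
    nlinarith [this, hsq, hs, hns]

lemma arcsin_le_two_mul {u : ℝ} (h0 : 0 ≤ u) (h : u ≤ 1 / 2) : Real.arcsin u ≤ 2 * u := by
  rcases eq_or_lt_of_le h0 with h0' | h0'
  · simp [← h0']
  rw [Real.arcsin_le_iff_le_sin ⟨by linarith, by linarith⟩
      ⟨by linarith [Real.pi_pos], by linarith [Real.two_le_pi]⟩]
  have := Real.sin_gt_sub_cube (by linarith : (0:ℝ) < 2 * u)
  have h2 : u * u ≤ (1/2) * (1/2) := mul_le_mul h h h0 (by norm_num)
  nlinarith [h2, h0']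

lemma arcsin_le_add_cube {u : ℝ} (h0 : 0 ≤ u) (h : u ≤ 1 / 2) :
    Real.arcsin u ≤ u + 2 * u ^ 3 := by
  rcases eq_or_lt_of_le h0 with h0' | h0'
  · simp [← h0']
  set φ := Real.arcsin u with hφdef
  have hφ2u : φ ≤ 2 * u := arcsin_le_two_mul h0 h
  have hφpos : 0 < φ := Real.arcsin_pos.2 h0'
  have hφ1 : φ ≤ 1 := by linarith
  have hsin : Real.sin φ = u := Real.sin_arcsin (by linarith) (by linarith)
  have hs3 := Real.sin_gt_sub_cube hφpos
  have hp3 : φ ^ 3 ≤ (2 * u) ^ 3 := pow_le_pow_left₀ hφpos.le hφ2u 3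
  nlinarith [hs3, hp3, hsin, pow_pos h0' 3]

lemma arccos_inner_le_chord (x y : E) (hx : ‖x‖ = 1) (hy : ‖y‖ = 1) {ε : ℝ}
    (hε1 : ε ≤ 1) (hch : ‖x - y‖ ≤ ε) :
    Real.arccos ⟪x, y⟫ ≤ (1 + ε ^ 2) * ‖x - y‖ := by
  rw [arccos_inner_eq_two_arcsin x y hx hy]
  have hc0 : 0 ≤ ‖x - y‖ := norm_nonneg _
  have h1 : Real.arcsin (‖x - y‖ / 2) ≤ ‖x - y‖ / 2 + 2 * (‖x - y‖ / 2) ^ 3 :=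
    arcsin_le_add_cube (by linarith) (by linarith)
  have hε0 : 0 ≤ ε := hc0.trans hch
  have hc2 : ‖x - y‖ * ‖x - y‖ ≤ ε * ε := mul_le_mul hch hch hc0 hε0
  nlinarith [h1, mul_le_mul_of_nonneg_left hc2 hc0]

lemma arccos_chain (f : ℕ → E) (hf : ∀ i, ‖f i‖ = 1) (N : ℕ) :
    Real.arccos ⟪f 0, f N⟫ ≤ ∑ i ∈ Finset.range N, Real.arccos ⟪f i, f (i + 1)⟫ := by
  induction N with
  | zero =>
    have : ⟪f 0, f 0⟫ = 1 := by rw [real_inner_self_eq_norm_sq, hf 0]; norm_num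
    simp [this, hf 0, Real.arccos_one]
  | succ k ih =>
    rw [Finset.sum_range_succ]
    calc Real.arccos ⟪f 0, f (k + 1)⟫
        ≤ Real.arccos ⟪f 0, f k⟫ + Real.arccos ⟪f k, f (k + 1)⟫ :=
          arccos_inner_triangle _ _ _ (hf 0) (hf k) (hf (k + 1))
    _ ≤ _ := add_le_add_left ih _

lemma real_le_of_forall_pos_le_add {a b : ℝ} (h : ∀ ε > 0, a ≤ b + ε) : a ≤ b := by
  by_contra hc
  push_neg at hc
  have := h ((a - b) / 2) (by linarith)
  linarith

end Aux

lemma arccos_le_eVariation {n : ℕ} (γ : ℝ → EuclideanSpace ℝ (Fin (n + 1)))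
    (hγ : ContinuousOn γ (Set.Icc 0 1)) (hsph : ∀ t ∈ Set.Icc (0:ℝ) 1, ‖γ t‖ = 1)
    {s t : ℝ} (hs : s ∈ Set.Icc (0:ℝ) 1) (ht : t ∈ Set.Icc (0:ℝ) 1) (hst : s ≤ t) :
    ENNReal.ofReal (Real.arccos ⟪γ s, γ t⟫) ≤ eVariationOn γ (Set.Icc s t) := by
  rcases eq_top_or_lt_top (eVariationOn γ (Set.Icc s t)) with h | h
  · rw [h]; exact le_top
  have hne := h.ne
  set V := (eVariationOn γ (Set.Icc s t)).toReal with hVdef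
  have hV0 : 0 ≤ V := ENNReal.toReal_nonneg
  have hVeq : eVariationOn γ (Set.Icc s t) = ENNReal.ofReal V := (ENNReal.ofReal_toReal hne).symm
  rw [hVeq, ENNReal.ofReal_le_ofReal_iff hV0]
  apply real_le_of_forall_pos_le_add
  intro ε' hε'
  set ε := min 1 (ε' / (V + 1)) with hεdef
  have hε0 : 0 < ε := lt_min one_pos (by positivity)
  have hε1 : ε ≤ 1 := min_le_left _ _
  have huc := isCompact_Icc.uniformContinuousOn_of_continuous hγ
  rw [Metric.uniformContinuousOn_iff] at huc
  obtain ⟨δ, hδ0, hδ⟩ := huc ε hε0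
  obtain ⟨N₀, hN₀⟩ := exists_nat_gt ((t - s) / δ)
  set N := N₀ + 1 with hNdef
  have hNpos : (0:ℝ) < (N:ℝ) := by positivity
  set step := (t - s) / (N:ℝ) with hstepdef
  have hstep0 : 0 ≤ step := div_nonneg (by linarith [hst]) hNpos.le
  have hstepδ : step < δ := by
    rw [hstepdef, div_lt_iff₀ hNpos]
    have h1 : (t - s) / δ < (N:ℝ) := hN₀.trans_le (by exact_mod_cast Nat.le_succ N₀)
    calc t - s = ((t - s) / δ) * δ := by field_simp
    _ < (N:ℝ) * δ := mul_lt_mul_of_pos_right h1 hδ0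
    _ = δ * (N:ℝ) := by ring
  set u : ℕ → ℝ := fun i => s + ((min i N : ℕ) : ℝ) * step with hudef
  have hmono : Monotone u := by
    intro i j hij
    have h1 : ((min i N : ℕ):ℝ) ≤ ((min j N : ℕ):ℝ) := by
      exact_mod_cast min_le_min hij le_rfl
    simp only [hudef]
    nlinarith [mul_le_mul_of_nonneg_right h1 hstep0]
  have hmem : ∀ i, u i ∈ Set.Icc s t := by
    intro i
    constructor
    · simp only [hudef]
      nlinarith [mul_nonneg (Nat.cast_nonneg (min i N) : (0:ℝ) ≤ _) hstep0]
    · simp only [hudef]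
      have h1 : ((min i N : ℕ):ℝ) ≤ (N:ℝ) := by exact_mod_cast min_le_right i N
      have h2 : ((min i N : ℕ):ℝ) * step ≤ (N:ℝ) * step := mul_le_mul_of_nonneg_right h1 hstep0
      have h3 : (N:ℝ) * step = t - s := by rw [hstepdef]; field_simp
      linarith
  have hsub : Set.Icc s t ⊆ Set.Icc (0:ℝ) 1 := Set.Icc_subset_Icc hs.1 ht.2
  have hunit : ∀ i, ‖γ (u i)‖ = 1 := fun i => hsph _ (hsub (hmem i))
  have hchord : ∀ i, dist (γ (u (i+1))) (γ (u i)) < ε := by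
    intro i
    apply hδ _ (hsub (hmem _)) _ (hsub (hmem _))
    rw [Real.dist_eq, abs_of_nonneg (sub_nonneg.2 (hmono (Nat.le_succ i)))]
    have h1 : ((min (i+1) N : ℕ):ℝ) ≤ ((min i N : ℕ):ℝ) + 1 := by
      have : min (i+1) N ≤ min i N + 1 := by omega
      exact_mod_cast this
    simp only [hudef]
    nlinarith [mul_le_mul_of_nonneg_right (show ((min (i+1) N : ℕ):ℝ) - ((min i N : ℕ):ℝ) ≤ 1 by linarith) hstep0]
  have hchain := arccos_chain (fun i => γ (u i)) hunit N
  have hu0 : u 0 = s := by simp [hudef]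
  have huN : u N = t := by
    simp only [hudef, min_self]
    rw [hstepdef]
    field_simp
    ring
  have hterm : ∀ i ∈ Finset.range N, Real.arccos ⟪γ (u i), γ (u (i+1))⟫ ≤
      (1 + ε^2) * dist (γ (u (i+1))) (γ (u i)) := by
    intro i _
    have hch : ‖γ (u i) - γ (u (i+1))‖ ≤ ε := by
      rw [← dist_eq_norm, dist_comm]
      exact (hchord i).le
    have h1 := arccos_inner_le_chord (γ (u i)) (γ (u (i+1))) (hunit i) (hunit (i+1)) hε1 hch
    calc Real.arccos ⟪γ (u i), γ (u (i+1))⟫ ≤ (1 + ε^2) * ‖γ (u i) - γ (u (i+1))‖ := h1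
    _ = (1 + ε^2) * dist (γ (u (i+1))) (γ (u i)) := by rw [← dist_eq_norm, dist_comm]
  have hsum : ∑ i ∈ Finset.range N, dist (γ (u (i+1))) (γ (u i)) ≤ V := by
    have h2 := eVariationOn.sum_le (f := γ) (n := N) hmono hmem
    rw [hVeq] at h2
    have h3 : ∑ i ∈ Finset.range N, edist (γ (u (i+1))) (γ (u i)) =
        ENNReal.ofReal (∑ i ∈ Finset.range N, dist (γ (u (i+1))) (γ (u i))) := by
      rw [ENNReal.ofReal_sum_of_nonneg fun i _ => dist_nonneg]
      exact Finset.sum_congr rfl fun i _ => edist_dist _ _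
    rw [h3, ENNReal.ofReal_le_ofReal_iff hV0] at h2
    exact h2
  have hfin : Real.arccos ⟪γ s, γ t⟫ ≤ (1 + ε^2) * V := by
    calc Real.arccos ⟪γ s, γ t⟫ = Real.arccos ⟪γ (u 0), γ (u N)⟫ := by rw [hu0, huN]
    _ ≤ ∑ i ∈ Finset.range N, Real.arccos ⟪γ (u i), γ (u (i+1))⟫ := hchain
    _ ≤ ∑ i ∈ Finset.range N, (1 + ε^2) * dist (γ (u (i+1))) (γ (u i)) := Finset.sum_le_sum hterm
    _ = (1 + ε^2) * ∑ i ∈ Finset.range N, dist (γ (u (i+1))) (γ (u i)) := by rw [Finset.mul_sum]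
    _ ≤ (1 + ε^2) * V := by nlinarith [hsum, hε0]
  have hεV : ε^2 * V ≤ ε' := by
    have h1 : ε ≤ ε' / (V + 1) := min_le_right _ _
    have h2 : ε * V ≤ (ε' / (V + 1)) * V := mul_le_mul_of_nonneg_right h1 hV0
    have h3 : (ε' / (V + 1)) * V ≤ ε' := by
      rw [div_mul_eq_mul_div, div_le_iff₀ (by linarith)]
      nlinarith
    have h4 : ε^2 ≤ ε := by nlinarith
    have h5 : ε^2 * V ≤ ε * V := mul_le_mul_of_nonneg_right h4 hV0
    linarith
  linarith

/-- A continuous path on the unit sphere `S^n ⊂ ℝ^{n+1}` whose image is not contained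
in any open hemisphere (for every unit vector `v` there is `t` with `⟪v, γ t⟫ ≤ 0`)
has length at least `π`. -/
theorem curve_not_in_open_hemisphere_length_ge_pi
    (n : ℕ) (hn : 1 ≤ n)
    (γ : ℝ → EuclideanSpace ℝ (Fin (n + 1)))
    (hγ : ContinuousOn γ (Set.Icc 0 1))
    (hsph : ∀ t ∈ Set.Icc (0 : ℝ) 1, ‖γ t‖ = 1)
    (hhemi : ∀ v : EuclideanSpace ℝ (Fin (n + 1)), ‖v‖ = 1 →
      ∃ t ∈ Set.Icc (0 : ℝ) 1, ⟪v, γ t⟫ ≤ 0) :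
    ENNReal.ofReal Real.pi ≤ eVariationOn γ (Set.Icc 0 1) := by
  by_contra hcon
  push_neg at hcon
  have hVne : eVariationOn γ (Set.Icc (0:ℝ) 1) ≠ ⊤ := ne_top_of_lt hcon
  set L := (eVariationOn γ (Set.Icc (0:ℝ) 1)).toReal with hLdef
  have hVeq : eVariationOn γ (Set.Icc (0:ℝ) 1) = ENNReal.ofReal L :=
    (ENNReal.ofReal_toReal hVne).symm
  have hL0 : 0 ≤ L := ENNReal.toReal_nonneg
  have hLπ : L < Real.pi := by
    rw [hVeq, ENNReal.ofReal_lt_ofReal_iff Real.pi_pos] at hcon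
    exact hcon
  set T := {r : ℝ | r ∈ Set.Icc (0:ℝ) 1 ∧
    ENNReal.ofReal (L / 2) ≤ eVariationOn γ (Set.Icc 0 r)} with hTdef
  have hT1 : (1:ℝ) ∈ T := by
    refine ⟨⟨zero_le_one, le_refl 1⟩, ?_⟩
    rw [hVeq]
    exact ENNReal.ofReal_le_ofReal (by linarith)
  have hTne : T.Nonempty := ⟨1, hT1⟩
  have hTbdd : BddBelow T := ⟨0, fun r hr => hr.1.1⟩
  set m := sInf T with hmdef
  have h0m : 0 ≤ m := le_csInf hTne fun r hr => hr.1.1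
  have hm1 : m ≤ 1 := csInf_le hTbdd hT1
  have hm : m ∈ Set.Icc (0:ℝ) 1 := ⟨h0m, hm1⟩
  have hmnorm : ‖γ m‖ = 1 := hsph m hm
  have key : ∀ t ∈ Set.Icc (0:ℝ) 1, Real.arccos ⟪γ m, γ t⟫ ≤ L / 2 := by
    intro t ht
    apply real_le_of_forall_pos_le_add
    intro ε hε
    have hcm : ContinuousWithinAt γ (Set.Icc 0 1) m := hγ m hm
    rw [Metric.continuousWithinAt_iff] at hcm
    obtain ⟨η, hη0, hη⟩ := hcm (min (ε / 4) 1) (by positivity)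
    have hsmall : ∀ r ∈ Set.Icc (0:ℝ) 1, |r - m| < η → Real.arccos ⟪γ m, γ r⟫ ≤ ε / 2 := by
      intro r hr hrm
      have hd := hη hr (by rwa [Real.dist_eq])
      have hch : ‖γ m - γ r‖ ≤ min (ε / 4) 1 := by
        rw [← dist_eq_norm, dist_comm]
        exact hd.le
      have h1 := arccos_inner_le_chord (γ m) (γ r) hmnorm (hsph r hr)
        (le_refl (1:ℝ)) (hch.trans (min_le_right _ _))
      have h2 : ‖γ m - γ r‖ ≤ ε / 4 := hch.trans (min_le_left _ _)
      calc Real.arccos ⟪γ m, γ r⟫ ≤ (1 + 1^2) * ‖γ m - γ r‖ := h1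
      _ ≤ 2 * (ε / 4) := by nlinarith [norm_nonneg (γ m - γ r)]
      _ = ε / 2 := by ring
    rcases lt_trichotomy t m with htm | htm | htm
    · -- t < m
      set p := max t (m - η / 2) with hpdef
      have htp : t ≤ p := le_max_left _ _
      have hpm : p < m := max_lt htm (by linarith)
      have hp01 : p ∈ Set.Icc (0:ℝ) 1 := ⟨le_trans ht.1 htp, le_trans hpm.le hm1⟩
      have hpη : |p - m| < η := by
        have h1 : m - η / 2 ≤ p := le_max_right _ _
        rw [abs_of_nonpos (by linarith)]
        linarith
      have hpT : p ∉ T := fun hpT' => absurd (csInf_le hTbdd hpT') (not_le.2 hpm)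
      have hvar : eVariationOn γ (Set.Icc 0 p) < ENNReal.ofReal (L / 2) := by
        by_contra hcc
        push_neg at hcc
        exact hpT ⟨hp01, hcc⟩
      have harc1 : Real.arccos ⟪γ t, γ p⟫ ≤ L / 2 := by
        have h1 := arccos_le_eVariation γ hγ hsph ht hp01 htp
        have h2 : eVariationOn γ (Set.Icc t p) ≤ eVariationOn γ (Set.Icc 0 p) :=
          eVariationOn.mono γ (Set.Icc_subset_Icc ht.1 le_rfl)
        have h3 := lt_of_le_of_lt (h1.trans h2) hvar
        rw [ENNReal.ofReal_lt_ofReal_iff_of_nonneg (Real.arccos_nonneg _)] at h3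
        exact h3.le
      have htri := arccos_inner_triangle (γ m) (γ p) (γ t) hmnorm (hsph p hp01) (hsph t ht)
      have hcomm : ⟪γ p, γ t⟫ = ⟪γ t, γ p⟫ := real_inner_comm _ _
      rw [hcomm] at htri
      have hsm2 := hsmall p hp01 hpη
      linarith
    · -- t = m
      rw [htm]
      have h1 : ⟪γ m, γ m⟫ = 1 := by
        rw [real_inner_self_eq_norm_sq, hmnorm]; norm_num
      rw [h1, Real.arccos_one]
      linarith
    · -- t > m
      set p := min t (m + η / 2) with hpdef
      have hpt : p ≤ t := min_le_left _ _
      have hmp : m < p := lt_min htm (by linarith)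
      have hp01 : p ∈ Set.Icc (0:ℝ) 1 := ⟨le_trans h0m hmp.le, le_trans hpt ht.2⟩
      have hpη : |p - m| < η := by
        have h1 : p ≤ m + η / 2 := min_le_right _ _
        rw [abs_of_nonneg (by linarith)]
        linarith
      have hvarlow : ENNReal.ofReal (L / 2) ≤ eVariationOn γ (Set.Icc 0 p) := by
        have hmp' : sInf T < p := hmp
        obtain ⟨r, hrT, hrp⟩ := (csInf_lt_iff hTbdd hTne).1 hmp'
        exact hrT.2.trans (eVariationOn.mono γ (Set.Icc_subset_Icc le_rfl hrp.le))
      have hvarup : eVariationOn γ (Set.Icc p t) ≤ ENNReal.ofReal (L / 2) := by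
        have hadd := eVariationOn.Icc_add_Icc γ (a := 0) (b := p) (c := t)
          (le_trans h0m hmp.le) hpt (Set.mem_univ p) (s := Set.univ)
        simp only [Set.univ_inter] at hadd
        have hup : eVariationOn γ (Set.Icc 0 t) ≤ ENNReal.ofReal L := by
          rw [← hVeq]
          exact eVariationOn.mono γ (Set.Icc_subset_Icc le_rfl ht.2)
        have hcalc : ENNReal.ofReal (L / 2) + eVariationOn γ (Set.Icc p t) ≤
            ENNReal.ofReal (L / 2) + ENNReal.ofReal (L / 2) := by
          calc ENNReal.ofReal (L / 2) + eVariationOn γ (Set.Icc p t)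
              ≤ eVariationOn γ (Set.Icc 0 p) + eVariationOn γ (Set.Icc p t) :=
                add_le_add_left hvarlow _
          _ = eVariationOn γ (Set.Icc 0 t) := hadd
          _ ≤ ENNReal.ofReal L := hup
          _ = ENNReal.ofReal (L / 2) + ENNReal.ofReal (L / 2) := by
              rw [← ENNReal.ofReal_add (by linarith) (by linarith)]
              norm_num
        exact (ENNReal.add_le_add_iff_left ENNReal.ofReal_ne_top).1 hcalc
      have harc1 : Real.arccos ⟪γ p, γ t⟫ ≤ L / 2 := by
        have h1 := arccos_le_eVariation γ hγ hsph hp01 ht hpt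
        have h2 := h1.trans hvarup
        rw [ENNReal.ofReal_le_ofReal_iff (by linarith)] at h2
        exact h2
      have htri := arccos_inner_triangle (γ m) (γ p) (γ t) hmnorm (hsph p hp01) (hsph t ht)
      have hsm2 := hsmall p hp01 hpη
      linarith
  obtain ⟨t, ht, hip⟩ := hhemi (γ m) hmnorm
  have h1 := key t ht
  have h2 : Real.pi / 2 ≤ Real.arccos ⟪γ m, γ t⟫ := by
    rw [Real.arccos_eq_pi_div_two_sub_arcsin]
    have := Real.arcsin_nonpos.2 hip
    linarith
  linarith
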